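/- arXiv:1402.1569 — 3 statements merged into one kernel-verified Lean document; each statement's English description precedes it below -/
import Mathlib

section
/- Suppose the weights (w_1, …, w_r) form an AT system on [a,b] for every multi-index in ℕ^r (an AT ensemble), let n⃗ be a multi-index with N = |n⃗|, and assume the normalizing constant Z_N = ∫_{[a,b]^N} det(x_j^{i−1})_{i,j=1}^N det(g_i(x_j))_{i,j=1}^N dx_1⋯dx_N is nonzero. If m is an even positive integer, then for every real z the m-th moment of the average characteristic polynomial is strictly positive: E[ ∏_{k=1}^N (z − x_k)^m ] > 0, where E[F] = (1/Z_N) ∫_{[a,b]^N} F(x_1,…,x_N) det(x_j^{i−1})_{i,j=1}^N det(g_i(x_j))_{i,j=1}^N dx_1⋯dx_N. -/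
open MeasureTheory Polynomial Finset

namespace MomentAux

variable {r : ℕ}

def off (n : Fin r → ℕ) (s : Fin r) : ℕ := ∑ t ∈ Finset.Iio s, n t

lemma off_insert (n : Fin r → ℕ) (s : Fin r) :
    off n s + n s = ∑ t ∈ insert s (Finset.Iio s), n t := by
  rw [Finset.sum_insert (by simp), off, Nat.add_comm]

lemma off_add_lt (n : Fin r → ℕ) (s : Fin r) {k : ℕ} (hk : k < n s) :
    off n s + k < ∑ j, n j := by
  have h1 := off_insert n s
  have h2 : ∑ t ∈ insert s (Finset.Iio s), n t ≤ ∑ j, n j :=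
    Finset.sum_le_sum_of_subset (Finset.subset_univ _)
  omega

lemma off_mono (n : Fin r → ℕ) {s s' : Fin r} (h : s < s') :
    off n s + n s ≤ off n s' := by
  rw [off_insert n s]
  refine Finset.sum_le_sum_of_subset ?_
  intro t ht
  simp only [Finset.mem_insert, Finset.mem_Iio] at ht ⊢
  rcases ht with rfl | ht
  · exact h
  · exact ht.trans h

lemma off_inj (n : Fin r → ℕ) {s s' : Fin r} {k k' : ℕ} (hk : k < n s) (hk' : k' < n s')
    (h : off n s + k = off n s' + k') : s = s' ∧ k = k' := by
  rcases lt_trichotomy s s' with hlt | heq | hgt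
  · have := off_mono n hlt; omega
  · exact ⟨heq, by subst heq; omega⟩
  · have := off_mono n hgt; omega

noncomputable def sigmaEquiv (n : Fin r → ℕ) : (Σ s : Fin r, Fin (n s)) ≃ Fin (∑ j, n j) :=
  Equiv.ofBijective (fun p => ⟨off n p.1 + p.2.1, off_add_lt n p.1 p.2.2⟩) <| by
    rw [Fintype.bijective_iff_injective_and_card]
    refine ⟨?_, by simp⟩
    rintro ⟨s, k⟩ ⟨s', k'⟩ h
    have h' : off n s + k.1 = off n s' + k'.1 := by
      simpa [Fin.ext_iff] using h
    obtain ⟨hs, hk⟩ := off_inj n k.2 k'.2 h'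
    subst hs
    simp [Fin.ext_iff, hk]

noncomputable def Vd {N : ℕ} (x : Fin N → ℝ) : ℝ :=
  Matrix.det (Matrix.of fun i j => x j ^ (i : ℕ))

noncomputable def Gd {N : ℕ} (g : Fin N → ℝ → ℝ) (x : Fin N → ℝ) : ℝ :=
  Matrix.det (Matrix.of fun i j => g i (x j))

lemma Vd_def {N : ℕ} (x : Fin N → ℝ) :
    Matrix.det (Matrix.of fun i j => x j ^ (i : ℕ)) = Vd x := rfl

lemma Gd_def {N : ℕ} (g : Fin N → ℝ → ℝ) (x : Fin N → ℝ) :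
    Matrix.det (Matrix.of fun i j => g i (x j)) = Gd g x := rfl

lemma Vd_eq_vandermonde {N : ℕ} (x : Fin N → ℝ) :
    Vd x = ∏ i : Fin N, ∏ j ∈ Finset.Ioi i, (x j - x i) := by
  rw [show Vd x = ((Matrix.vandermonde x).transpose).det from rfl, Matrix.det_transpose,
    Matrix.det_vandermonde]

lemma indicator_pi_prod {N : ℕ} (E : Set ℝ) (f : Fin N → ℝ → ℝ) (x : Fin N → ℝ) :
    (Set.univ.pi fun _ : Fin N => E).indicator (fun y => ∏ j, f j (y j)) x
      = ∏ j, E.indicator (f j) (x j) := by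
  by_cases h : x ∈ Set.univ.pi fun _ : Fin N => E
  · rw [Set.indicator_of_mem h]
    exact Finset.prod_congr rfl fun j _ => (Set.indicator_of_mem (h j trivial) _).symm
  · rw [Set.indicator_of_notMem h]
    have : ∃ j, x j ∉ E := by simpa [Set.mem_pi] using h
    obtain ⟨j, hj⟩ := this
    exact (Finset.prod_eq_zero (Finset.mem_univ j) (Set.indicator_of_notMem hj _)).symm

lemma integrableOn_pi_prod {N : ℕ} {E : Set ℝ} (hEm : MeasurableSet E)
    {f : Fin N → ℝ → ℝ} (hf : ∀ j, IntegrableOn (f j) E) :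
    IntegrableOn (fun x : Fin N → ℝ => ∏ j, f j (x j)) (Set.univ.pi fun _ => E) := by
  have h1 : Integrable (fun x : Fin N → ℝ => ∏ j, E.indicator (f j) (x j)) :=
    Integrable.fintype_prod (f := fun j => E.indicator (f j)) fun j =>
      (integrable_indicator_iff hEm).mpr (hf j)
  have h2 : Integrable ((Set.univ.pi fun _ : Fin N => E).indicator
      fun x : Fin N → ℝ => ∏ j, f j (x j)) := by
    rw [funext (indicator_pi_prod E f)]; exact h1
  exact (integrable_indicator_iff (MeasurableSet.univ_pi fun _ => hEm)).mp h2

lemma prod_mul_det_mul_det {N : ℕ} (g : Fin N → ℝ → ℝ) (p : ℝ → ℝ) (x : Fin N → ℝ) :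
    (∏ k, p (x k)) * (Vd x * Gd g x)
    = ∑ σ : Equiv.Perm (Fin N), ∑ τ : Equiv.Perm (Fin N),
        (((Equiv.Perm.sign σ : ℤ) : ℝ) * ((Equiv.Perm.sign τ : ℤ) : ℝ)) *
          ∏ j, (p (x j) * ((x j) ^ ((σ j : ℕ)) * g (τ j) (x j))) := by
  rw [Vd, Gd, Matrix.det_apply, Matrix.det_apply, Finset.sum_mul_sum, Finset.mul_sum]
  refine Finset.sum_congr rfl fun σ _ => ?_
  rw [Finset.mul_sum]
  refine Finset.sum_congr rfl fun τ _ => ?_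
  simp only [Matrix.of_apply, Units.smul_def, zsmul_eq_mul, Finset.prod_mul_distrib]
  ring

lemma det_comp_perm {N : ℕ} (f : Fin N → ℝ → ℝ) (x : Fin N → ℝ) (σ : Equiv.Perm (Fin N)) :
    Matrix.det (Matrix.of fun i j => f i (x (σ j)))
      = ((Equiv.Perm.sign σ : ℤ) : ℝ) * Matrix.det (Matrix.of fun i j => f i (x j)) := by
  have h : (Matrix.of fun i j => f i (x (σ j)))
      = (Matrix.of fun i j => f i (x j)).submatrix id σ := rfl
  rw [h, Matrix.det_permute']

lemma Vd_comp_perm {N : ℕ} (x : Fin N → ℝ) (σ : Equiv.Perm (Fin N)) :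
    Vd (x ∘ σ) = ((Equiv.Perm.sign σ : ℤ) : ℝ) * Vd x :=
  det_comp_perm (fun i t => t ^ (i : ℕ)) x σ

lemma Gd_comp_perm {N : ℕ} (g : Fin N → ℝ → ℝ) (x : Fin N → ℝ) (σ : Equiv.Perm (Fin N)) :
    Gd g (x ∘ σ) = ((Equiv.Perm.sign σ : ℤ) : ℝ) * Gd g x :=
  det_comp_perm g x σ

lemma VG_comp_sort {N : ℕ} (g : Fin N → ℝ → ℝ) (x : Fin N → ℝ) (σ : Equiv.Perm (Fin N)) :
    Vd (x ∘ σ) * Gd g (x ∘ σ) = Vd x * Gd g x := by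
  rw [Vd_comp_perm, Gd_comp_perm]
  rcases Int.units_eq_one_or (Equiv.Perm.sign σ) with h | h <;> rw [h] <;> push_cast <;> ring

lemma Vd_eq_zero {N : ℕ} {x : Fin N → ℝ} (hx : ¬ Function.Injective x) : Vd x = 0 := by
  rw [Vd_eq_vandermonde]
  simp only [Function.Injective, not_forall] at hx
  obtain ⟨i, j, hij, hne⟩ := hx
  rcases lt_or_gt_of_ne hne with h | h
  · exact Finset.prod_eq_zero (Finset.mem_univ i)
      (Finset.prod_eq_zero (Finset.mem_Ioi.mpr h) (by rw [hij, sub_self]))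
  · exact Finset.prod_eq_zero (Finset.mem_univ j)
      (Finset.prod_eq_zero (Finset.mem_Ioi.mpr h) (by rw [hij, sub_self]))

end MomentAux



/-- The system of weights `w` forms an AT (algebraic Chebyshev) system on the interval `E`
for the multi-index `n`: every nontrivial linear combination of the functions
`x^i * w j x` (`i < n j`), i.e. every nontrivial `∑ j, q j (x) * w j x` with
`deg (q j) ≤ n j - 1`, has at most `|n| - 1` zeros on `E`. -/
def IsATSystemFor {r : ℕ} (E : Set ℝ) (w : Fin r → ℝ → ℝ) (n : Fin r → ℕ) : Prop :=
  ∀ q : Fin r → Polynomial ℝ, (∀ j, (q j).degree < (n j : WithBot ℕ)) → (∃ j, q j ≠ 0) →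
    {x ∈ E | ∑ j, (q j).eval x * w j x = 0}.Finite ∧
    {x ∈ E | ∑ j, (q j).eval x * w j x = 0}.ncard + 1 ≤ ∑ j, n j

/-- `P` is the type II multiple orthogonal polynomial on `E` for the weights `w` and the
multi-index `n`: it is monic of degree `|n|` and `∫ P(x) x^k w j (x) dx = 0` for all
`k < n j`. -/
def IsTypeII {r : ℕ} (E : Set ℝ) (w : Fin r → ℝ → ℝ) (n : Fin r → ℕ)
    (P : Polynomial ℝ) : Prop :=
  P.Monic ∧ P.natDegree = ∑ j, n j ∧
    ∀ j : Fin r, ∀ k < n j, ∫ x in E, P.eval x * x ^ k * w j x = 0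

/-- `p` is a path of multi-indices of length `l` starting at `n`: `p 0 = n`,
`|p j| = |n| + j`, and `p` is monotone componentwise. -/
def IsPath {r : ℕ} (l : ℕ) (n : Fin r → ℕ) (p : Fin l → Fin r → ℕ) : Prop :=
  (∀ h : 0 < l, p ⟨0, h⟩ = n) ∧
    (∀ j : Fin l, ∑ i, p j i = (∑ i, n i) + (j : ℕ)) ∧
    (∀ j k : Fin l, j ≤ k → ∀ i, p j i ≤ p k i)

/-- The Wronskian `det (P j ^ (i))_{i,j}` of a family of polynomials. -/
noncomputable def polyWronskian {l : ℕ} (P : Fin l → Polynomial ℝ) : Polynomial ℝ :=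
  Matrix.det (Matrix.of fun i j : Fin l => Polynomial.derivative^[(i : ℕ)] (P j))



set_option maxHeartbeats 2000000 in
open MomentAux in
/-- for an AT ensemble with multi-index `n` and `N = |n|` points, the even
moments of the average characteristic polynomial are strictly positive at every real
`z`: `E[∏_k (z - x_k)^m] > 0` for `m` even and positive. -/
theorem moment_average_char_poly_pos_of_even {r : ℕ} (hr : 1 ≤ r)
    (E : Set ℝ) (hE : E.OrdConnected) (hEm : MeasurableSet E)
    (w : Fin r → ℝ → ℝ) (hwc : ∀ j, ContinuousOn (w j) E)
    (hwi : ∀ (j : Fin r) (k : ℕ), IntegrableOn (fun x => x ^ k * w j x) E)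
    (hAT : ∀ n : Fin r → ℕ, IsATSystemFor E w n)
    (n : Fin r → ℕ)
    (g : Fin (∑ i, n i) → ℝ → ℝ)
    (hg : ∀ (s : Fin r) (i : ℕ) (hi : i < n s)
        (hlt : (∑ t ∈ Finset.Iio s, n t) + i < ∑ i, n i),
        g ⟨(∑ t ∈ Finset.Iio s, n t) + i, hlt⟩ = fun x => x ^ i * w s x)
    (Z : ℝ)
    (hZ : Z = ∫ x : Fin (∑ i, n i) → ℝ in (Set.univ.pi fun _ => E),
        Matrix.det (Matrix.of fun i j => x j ^ (i : ℕ)) *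
        Matrix.det (Matrix.of fun i j => g i (x j)))
    (hZ0 : Z ≠ 0)
    (m : ℕ) (hm : 1 ≤ m) (hmeven : Even m) (z : ℝ) :
    0 < (∫ x : Fin (∑ i, n i) → ℝ in (Set.univ.pi fun _ => E),
        (∏ k, (z - x k) ^ m) *
          (Matrix.det (Matrix.of fun i j => x j ^ (i : ℕ)) *
           Matrix.det (Matrix.of fun i j => g i (x j)))) / Z := by
  classical
  simp only [Vd_def, Gd_def] at hZ ⊢
  set piE : Set (Fin (∑ i, n i) → ℝ) := Set.univ.pi fun _ => E with hpiE
  have hpiEm : MeasurableSet piE := MeasurableSet.univ_pi fun _ => hEm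
  -- structure of g
  have hgd : ∀ i : Fin (∑ i, n i), ∃ (s : Fin r) (k : ℕ), k < n s
      ∧ g i = fun x => x ^ k * w s x := by
    intro i
    obtain ⟨⟨s, k⟩, rfl⟩ := (sigmaEquiv n).surjective i
    exact ⟨s, k, k.2, hg s k k.2 (off_add_lt n s k.2)⟩
  have gcont : ∀ i, ContinuousOn (g i) E := by
    intro i
    obtain ⟨s, k, _, hgi⟩ := hgd i
    rw [hgi]
    exact (continuous_pow k).continuousOn.mul (hwc s)
  have gint : ∀ (i) (q : Polynomial ℝ), IntegrableOn (fun t => q.eval t * g i t) E := by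
    intro i q
    obtain ⟨s, k, _, hgi⟩ := hgd i
    rw [hgi]
    have h : (fun t : ℝ => q.eval t * (t ^ k * w s t))
        = fun t => ∑ j ∈ Finset.range (q.natDegree + 1), q.coeff j * (t ^ (j + k) * w s t) := by
      funext t
      rw [Polynomial.eval_eq_sum_range, Finset.sum_mul]
      exact Finset.sum_congr rfl fun j _ => by ring
    rw [h]
    exact integrable_finset_sum _ fun j _ => ((hwi s (j + k)).const_mul _)
  -- integrability of the densities
  have key_int : ∀ q : Polynomial ℝ,
      IntegrableOn (fun x : Fin (∑ i, n i) → ℝ => (∏ k, q.eval (x k)) * (Vd x * Gd g x)) piE := by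
    intro q
    have hrw : (fun x : Fin (∑ i, n i) → ℝ => (∏ k, q.eval (x k)) * (Vd x * Gd g x))
        = fun x => ∑ σ : Equiv.Perm (Fin (∑ i, n i)), ∑ τ : Equiv.Perm (Fin (∑ i, n i)),
        (((Equiv.Perm.sign σ : ℤ) : ℝ) * ((Equiv.Perm.sign τ : ℤ) : ℝ)) *
          ∏ j, (q.eval (x j) * ((x j) ^ ((σ j : ℕ)) * g (τ j) (x j))) :=
      funext fun x => prod_mul_det_mul_det g (fun t => q.eval t) x
    rw [hrw]
    refine integrable_finset_sum _ fun σ _ => integrable_finset_sum _ fun τ _ => ?_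
    have hF : IntegrableOn
        (fun x : Fin (∑ i, n i) → ℝ => ∏ j, (q.eval (x j) * ((x j) ^ ((σ j : ℕ)) * g (τ j) (x j))))
        piE := by
      refine integrableOn_pi_prod (f := fun j t => q.eval t * (t ^ ((σ j : ℕ)) * g (τ j) t))
        hEm fun j => ?_
      have h := gint (τ j) (q * Polynomial.X ^ ((σ j : ℕ)))
      simpa [Polynomial.eval_mul, Polynomial.eval_pow, Polynomial.eval_X, mul_assoc] using h
    exact hF.const_mul _
  have hVGint : IntegrableOn (fun x : Fin (∑ i, n i) → ℝ => Vd x * Gd g x) piE := by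
    have h := key_int 1; simpa using h
  have habs : IntegrableOn (fun x : Fin (∑ i, n i) → ℝ => |Vd x * Gd g x|) piE := hVGint.abs
  have hprod_int : IntegrableOn
      (fun x : Fin (∑ i, n i) → ℝ => (∏ k, (z - x k) ^ m) * (Vd x * Gd g x)) piE := by
    have h := key_int ((Polynomial.C z - Polynomial.X) ^ m)
    simpa using h
  have hnn : ∀ x : Fin (∑ i, n i) → ℝ, 0 ≤ ∏ k, (z - x k) ^ m :=
    fun x => Finset.prod_nonneg fun k _ => hmeven.pow_nonneg _
  have hprodabs_int : IntegrableOn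
      (fun x : Fin (∑ i, n i) → ℝ => (∏ k, (z - x k) ^ m) * |Vd x * Gd g x|) piE := by
    refine IntegrableOn.congr_fun hprod_int.abs (fun x _ => ?_) hpiEm
    rw [abs_mul, abs_of_nonneg (hnn x)]
  -- the bad set is null
  have hbad : (volume.restrict piE) {x : Fin (∑ i, n i) → ℝ | ∃ k, x k = z} = 0 := by
    have hsub : {x : Fin (∑ i, n i) → ℝ | ∃ k, x k = z}
        ⊆ ⋃ k, {x : Fin (∑ i, n i) → ℝ | x k = z} := by
      intro x hx
      obtain ⟨k, hk⟩ := hx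
      exact Set.mem_iUnion.mpr ⟨k, hk⟩
    refine measure_mono_null hsub (measure_iUnion_null fun k => ?_)
    have hv0 : volume {x : Fin (∑ i, n i) → ℝ | x k = z} = 0 := by
      have hset : {x : Fin (∑ i, n i) → ℝ | x k = z}
          = Set.pi Set.univ (fun i => if i = k then ({z} : Set ℝ) else Set.univ) := by
        ext x
        simp only [Set.mem_setOf_eq, Set.mem_pi, Set.mem_univ, forall_true_left]
        constructor
        · intro h i
          by_cases hik : i = k
          · subst hik; simp [h]
          · simp [hik]
        · intro h
          have hk := h k
          simpa using hk
      rw [hset, volume_pi_pi]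
      exact Finset.prod_eq_zero (Finset.mem_univ k) (by simp)
    exact le_antisymm (le_trans (Measure.restrict_apply_le (μ := volume) piE _) hv0.le) zero_le
  -- positivity transfer
  have hkey : 0 < (∫ x in piE, |Vd x * Gd g x|) →
      0 < ∫ x in piE, (∏ k, (z - x k) ^ m) * |Vd x * Gd g x| := by
    intro hI1
    have h1 := (integral_pos_iff_support_of_nonneg (fun x => abs_nonneg _) habs).mp hI1
    refine (integral_pos_iff_support_of_nonneg
      (fun x => mul_nonneg (hnn x) (abs_nonneg _)) hprodabs_int).mpr ?_
    have hsub2 : Function.support (fun x : Fin (∑ i, n i) → ℝ => |Vd x * Gd g x|) ⊆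
        Function.support (fun x : Fin (∑ i, n i) → ℝ => (∏ k, (z - x k) ^ m) * |Vd x * Gd g x|)
          ∪ {x | ∃ k, x k = z} := by
      intro x hx
      by_cases hb : ∃ k, x k = z
      · exact Or.inr hb
      · push_neg at hb
        refine Or.inl ?_
        simp only [Function.mem_support] at hx ⊢
        refine mul_ne_zero ?_ hx
        exact Finset.prod_ne_zero_iff.mpr fun k _ =>
          pow_ne_zero _ (sub_ne_zero.mpr fun h => hb k h.symm)
    have hle := (measure_mono (μ := volume.restrict piE) hsub2).trans (measure_union_le _ _)
    rw [hbad, add_zero] at hle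
    exact lt_of_lt_of_le h1 hle
  -- the ordered simplex
  set S : Set (Fin (∑ i, n i) → ℝ) := {x | (∀ i, x i ∈ E) ∧ StrictMono x} with hS
  by_cases hSne : S.Nonempty
  case neg =>
    exfalso
    apply hZ0
    have hNpos : 0 < ∑ i, n i := by
      by_contra hc
      push_neg at hc
      have h0 : ∑ i, n i = 0 := by omega
      exact hSne ⟨fun _ => 0, fun i => absurd i.isLt (by omega),
        fun a b hab => absurd a.isLt (by omega)⟩
    have hNne : ((∑ i, n i : ℕ) : ℝ) ≠ 0 := (Nat.cast_pos.mpr hNpos).ne'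
    have haux : ∀ a b : ℝ, a ∈ E → b ∈ E → ¬ a < b := by
      intro a b ha hb hab
      have hd : (0:ℝ) < (b - a) / ((∑ i, n i : ℕ) : ℝ) := by
        apply div_pos (by linarith) (Nat.cast_pos.mpr hNpos)
      have hNd : ((∑ i, n i : ℕ) : ℝ) * ((b - a) / ((∑ i, n i : ℕ) : ℝ)) = b - a := by
        rw [← mul_div_assoc]
        exact mul_div_cancel_left₀ _ hNne
      refine hSne ⟨fun i => a + ((i : ℕ) : ℝ) * ((b - a) / ((∑ i, n i : ℕ) : ℝ)),
        fun i => ?_, fun p q hpq => ?_⟩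
      · refine hE.out ha hb ⟨?_, ?_⟩
        · have h1 : (0:ℝ) ≤ ((i : ℕ) : ℝ) * ((b - a) / ((∑ i, n i : ℕ) : ℝ)) :=
            mul_nonneg (Nat.cast_nonneg _) hd.le
          linarith
        · have hiN : ((i : ℕ) : ℝ) ≤ ((∑ i, n i : ℕ) : ℝ) - 1 := by
            have := i.isLt
            have h2 : ((i : ℕ) : ℝ) + 1 ≤ ((∑ i, n i : ℕ) : ℝ) := by exact_mod_cast this
            linarith
          have h3 := mul_le_mul_of_nonneg_right hiN hd.le
          nlinarith
      · have hlt : ((p : ℕ) : ℝ) < ((q : ℕ) : ℝ) := by exact_mod_cast hpq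
        have h4 := mul_lt_mul_of_pos_right hlt hd
        linarith
    have hsub : E.Subsingleton := by
      intro a ha b hb
      by_contra hab
      rcases lt_or_gt_of_ne hab with h | h
      · exact haux a b ha hb h
      · exact haux b a hb ha h
    have h0 : volume piE = 0 := by
      rw [hpiE, volume_pi_pi]
      exact Finset.prod_eq_zero (Finset.mem_univ ⟨0, hNpos⟩) (hsub.measure_zero _)
    rw [hZ, Measure.restrict_eq_zero.mpr h0, integral_zero_measure]
  case pos =>
  -- nonvanishing on S
  have hne : ∀ x ∈ S, Vd x * Gd g x ≠ 0 := by
    rintro x ⟨hxE, hxmono⟩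
    have hxinj := hxmono.injective
    refine mul_ne_zero ?_ ?_
    · rw [Vd_eq_vandermonde]
      exact Finset.prod_ne_zero_iff.mpr fun i _ => Finset.prod_ne_zero_iff.mpr fun j hj =>
        sub_ne_zero.mpr fun h => (Finset.mem_Ioi.mp hj).ne' (hxinj h)
    · intro hdet
      have hdet' : (Matrix.of fun i j => g i (x j)).det = 0 := hdet
      obtain ⟨v, hv0, hvM⟩ := Matrix.exists_vecMul_eq_zero_iff.mpr hdet'
      set v' : ℕ → ℝ := fun t => if h : t < ∑ i, n i then v ⟨t, h⟩ else 0 with hv'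
      set q : Fin r → Polynomial ℝ := fun s =>
        ∑ k ∈ Finset.range (n s), Polynomial.C (v' (off n s + k)) * Polynomial.X ^ k with hq
      have hveq : ∀ (s : Fin r) (k : Fin (n s)), v' (off n s + k) = v (sigmaEquiv n ⟨s, k⟩) := by
        intro s k
        simp only [hv']
        rw [dif_pos (off_add_lt n s k.2)]
        rfl
      have hqcoeff : ∀ (s : Fin r) (k : Fin (n s)), (q s).coeff (k : ℕ) = v' (off n s + k) := by
        intro s k
        rw [hq]
        simp only [Polynomial.finset_sum_coeff, Polynomial.coeff_C_mul, Polynomial.coeff_X_pow,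
          mul_ite, mul_one, mul_zero]
        rw [Finset.sum_ite_eq]
        exact if_pos (Finset.mem_range.mpr k.2)
      have hdeg : ∀ s, (q s).degree < (n s : WithBot ℕ) := by
        intro s
        refine lt_of_le_of_lt (Polynomial.degree_sum_le _ _) ?_
        rw [Finset.sup_lt_iff (by exact WithBot.bot_lt_coe _)]
        intro k hk
        exact lt_of_le_of_lt (Polynomial.degree_C_mul_X_pow_le _ _)
          (by exact_mod_cast Finset.mem_range.mp hk)
      have hqeval : ∀ y : ℝ, ∑ s, (q s).eval y * w s y = ∑ i, v i * g i y := by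
        intro y
        have hL : ∀ s : Fin r, (q s).eval y * w s y
            = ∑ k : Fin (n s), v' (off n s + k) * (y ^ (k : ℕ) * w s y) := by
          intro s
          rw [hq]
          rw [Polynomial.eval_finset_sum, Finset.sum_mul, Finset.sum_range]
          exact Finset.sum_congr rfl fun k _ => by
            simp only [Polynomial.eval_mul, Polynomial.eval_C, Polynomial.eval_pow,
              Polynomial.eval_X]
            ring
        rw [Finset.sum_congr rfl fun s _ => hL s]
        rw [← Equiv.sum_comp (sigmaEquiv n) (fun i => v i * g i y)]
        rw [← Finset.univ_sigma_univ, Finset.sum_sigma]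
        refine Finset.sum_congr rfl fun s _ => Finset.sum_congr rfl fun k _ => ?_
        rw [hveq s k]
        congr 1
        exact (congrFun (hg s k k.2 (off_add_lt n s k.2)) y).symm
      have hzero : ∀ j, ∑ s, (q s).eval (x j) * w s (x j) = 0 := by
        intro j
        rw [hqeval]
        have h := congrFun hvM j
        simpa [Matrix.vecMul, dotProduct] using h
      have hqne : ∃ s, q s ≠ 0 := by
        obtain ⟨i, hvi⟩ := Function.ne_iff.mp hv0
        obtain ⟨⟨s, k⟩, rfl⟩ := (sigmaEquiv n).surjective i
        refine ⟨s, fun hc => hvi ?_⟩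
        rw [← hveq s k, ← hqcoeff s k, hc, Polynomial.coeff_zero]
        rfl
      obtain ⟨hfin, hcard⟩ := hAT n q hdeg hqne
      have hsubset : Set.range x ⊆ {y ∈ E | ∑ s, (q s).eval y * w s y = 0} := by
        rintro _ ⟨j, rfl⟩
        exact ⟨hxE j, hzero j⟩
      have hrange : (Set.range x).ncard = ∑ i, n i := by
        rw [← Set.image_univ, Set.ncard_image_of_injective _ hxinj, Set.ncard_univ,
          Nat.card_eq_fintype_card, Fintype.card_fin]
      have hle := Set.ncard_le_ncard hsubset hfin
      omega
  -- continuity on S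
  have hcont : ContinuousOn (fun x : Fin (∑ i, n i) → ℝ => Vd x * Gd g x) S := by
    have hrw : (fun x : Fin (∑ i, n i) → ℝ => Vd x * Gd g x)
        = fun x => ∑ σ : Equiv.Perm (Fin (∑ i, n i)), ∑ τ : Equiv.Perm (Fin (∑ i, n i)),
          (((Equiv.Perm.sign σ : ℤ) : ℝ) * ((Equiv.Perm.sign τ : ℤ) : ℝ)) *
            ∏ j, ((x j) ^ ((σ j : ℕ)) * g (τ j) (x j)) := by
      funext x
      have h := prod_mul_det_mul_det g (fun _ => (1:ℝ)) x
      simpa using h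
    rw [hrw]
    refine continuousOn_finset_sum _ fun σ _ => continuousOn_finset_sum _ fun τ _ => ?_
    refine ContinuousOn.mul continuousOn_const ?_
    refine continuousOn_finset_prod _ fun j _ => ?_
    refine ContinuousOn.mul ((continuous_apply j).pow _).continuousOn ?_
    exact ContinuousOn.comp (gcont (τ j)) (continuous_apply j).continuousOn fun x hx => hx.1 j
  -- convexity of S
  have hconv : Convex ℝ S := by
    have hconvE : Convex ℝ E := convex_iff_ordConnected.mpr hE
    intro x hx y hy a b ha hb hab
    refine ⟨fun i => ?_, fun p hq hpq => ?_⟩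
    · have h := hconvE (hx.1 i) (hy.1 i) ha hb hab
      simpa using h
    · have hxpq := hx.2 hpq
      have hypq := hy.2 hpq
      simp only [Pi.add_apply, Pi.smul_apply, smul_eq_mul]
      rcases eq_or_lt_of_le ha with ha0 | ha0
      · have hb0 : 0 < b := by rw [← ha0] at hab; linarith
        have h1 := mul_le_mul_of_nonneg_left hxpq.le ha
        have h2 := mul_lt_mul_of_pos_left hypq hb0
        linarith
      · have h1 := mul_lt_mul_of_pos_left hxpq ha0
        have h2 := mul_le_mul_of_nonneg_left hypq.le hb
        linarith
  have hScon : IsPreconnected S := hconv.isPreconnected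
  obtain ⟨x0, hx0⟩ := hSne
  have hsign : (∀ x ∈ S, 0 < Vd x * Gd g x) ∨ (∀ x ∈ S, Vd x * Gd g x < 0) := by
    rcases lt_or_gt_of_ne (hne x0 hx0) with hneg | hpos
    · right
      intro y hy
      by_contra h
      push_neg at h
      have hypos : 0 < Vd y * Gd g y := h.lt_of_ne' (hne y hy)
      obtain ⟨u, huS, hu0⟩ := hScon.intermediate_value hx0 hy hcont ⟨hneg.le, hypos.le⟩
      exact hne u huS hu0
    · left
      intro y hy
      by_contra h
      push_neg at h
      have hyneg : Vd y * Gd g y < 0 := h.lt_of_ne (hne y hy)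
      obtain ⟨u, huS, hu0⟩ := hScon.intermediate_value hy hx0 hcont ⟨hyneg.le, hpos.le⟩
      exact hne u huS hu0
  -- sorting
  have hperm : ∀ x : Fin (∑ i, n i) → ℝ, (∀ i, x i ∈ E) → Function.Injective x →
      ∃ y ∈ S, Vd x * Gd g x = Vd y * Gd g y := by
    intro x hxE hxinj
    refine ⟨x ∘ Tuple.sort x, ⟨fun i => hxE _, ?_⟩, (VG_comp_sort g x (Tuple.sort x)).symm⟩
    exact (Tuple.monotone_sort x).strictMono_of_injective (hxinj.comp (Equiv.injective _))
  rcases hsign with hpos | hneg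
  · -- positive case
    have hpt : ∀ x ∈ piE, Vd x * Gd g x = |Vd x * Gd g x| := by
      intro x hx
      by_cases hinj : Function.Injective x
      · obtain ⟨y, hyS, hxy⟩ := hperm x (fun i => hx i trivial) hinj
        rw [hxy]
        exact (abs_of_pos (hpos y hyS)).symm
      · rw [Vd_eq_zero hinj]; simp
    have hZeq : Z = ∫ x in piE, |Vd x * Gd g x| := by
      rw [hZ]; exact setIntegral_congr_fun hpiEm fun x hx => hpt x hx
    have hI1ne : (∫ x in piE, |Vd x * Gd g x|) ≠ 0 := by rw [← hZeq]; exact hZ0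
    have hI1pos : 0 < ∫ x in piE, |Vd x * Gd g x| :=
      (integral_nonneg fun x => abs_nonneg _).lt_of_ne (Ne.symm hI1ne)
    have hNumeq : (∫ x in piE, (∏ k, (z - x k) ^ m) * (Vd x * Gd g x))
        = ∫ x in piE, (∏ k, (z - x k) ^ m) * |Vd x * Gd g x| :=
      setIntegral_congr_fun hpiEm fun x hx => by rw [hpt x hx, abs_abs]
    rw [hNumeq, hZeq]
    exact div_pos (hkey hI1pos) hI1pos
  · -- negative case
    have hpt : ∀ x ∈ piE, Vd x * Gd g x = -|Vd x * Gd g x| := by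
      intro x hx
      by_cases hinj : Function.Injective x
      · obtain ⟨y, hyS, hxy⟩ := hperm x (fun i => hx i trivial) hinj
        rw [hxy]
        rw [abs_of_neg (hneg y hyS), neg_neg]
      · rw [Vd_eq_zero hinj]; simp
    have hZeq : Z = -∫ x in piE, |Vd x * Gd g x| := by
      rw [hZ, ← integral_neg]
      exact setIntegral_congr_fun hpiEm fun x hx => hpt x hx
    have hI1ne : (∫ x in piE, |Vd x * Gd g x|) ≠ 0 := by
      intro h0
      exact hZ0 (by rw [hZeq, h0, neg_zero])
    have hI1pos : 0 < ∫ x in piE, |Vd x * Gd g x| :=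
      (integral_nonneg fun x => abs_nonneg _).lt_of_ne (Ne.symm hI1ne)
    have hNumeq : (∫ x in piE, (∏ k, (z - x k) ^ m) * (Vd x * Gd g x))
        = -∫ x in piE, (∏ k, (z - x k) ^ m) * |Vd x * Gd g x| := by
      rw [← integral_neg]
      refine setIntegral_congr_fun hpiEm fun x hx => ?_
      rw [hpt x hx, abs_neg, abs_abs]; ring
    rw [hNumeq, hZeq]
    exact div_pos_of_neg_of_neg (neg_neg_iff_pos.mpr (hkey hI1pos))
      (neg_neg_iff_pos.mpr hI1pos)
end

section
/- For every multi-index n⃗ ∈ ℕ^r, every j ∈ {1, …, r}, and every l ≥ 1, the Wronskian of multiple Hermite polynomials along the path (n⃗, n⃗+e⃗_j, …, n⃗+(l−1)e⃗_j) equals (−2)^{l(l−1)/2} times the corresponding Hankel determinant: det( H_{n⃗+k e⃗_j}^{(i)}(x) )_{i,k=0}^{l−1} = (−2)^{l(l−1)/2} · det( H_{n⃗+(i+k)e⃗_j}(x) )_{i,k=0}^{l−1} for all x ∈ ℝ, where H^{(i)} denotes the i-th derivative. -/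
open MeasureTheory Polynomial Finset

/-- `P` is the multiple Hermite polynomial for the (pairwise distinct) parameters `c`
and the multi-index `n`: it is monic of degree `|n|` and satisfies
`∫ x^k P(x) exp(-x² + c j x) dx = 0` for all `k < n j` and all `j`. -/
def IsMultipleHermite {r : ℕ} (c : Fin r → ℝ) (n : Fin r → ℕ)
    (P : Polynomial ℝ) : Prop :=
  P.Monic ∧ P.natDegree = ∑ i, n i ∧
    ∀ j : Fin r, ∀ k < n j,
      ∫ x : ℝ, x ^ k * P.eval x * Real.exp (-x ^ 2 + c j * x) = 0

/-- The `j`-th standard unit multi-index `e⃗_j` in `ℕ^r`. -/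
def unitMI {r : ℕ} (j : Fin r) : Fin r → ℕ := fun i => if i = j then 1 else 0

section MHAuxSection
open Filter Real

namespace MHAux

lemma integrable_poly_gauss (P : Polynomial ℝ) :
    Integrable (fun x : ℝ => P.eval x * Real.exp (-x ^ 2)) := by
  induction P using Polynomial.induction_on' with
  | add p q hp hq => exact (hp.add hq).congr (by filter_upwards with x; simp [add_mul])
  | monomial m a =>
    have h := integrable_rpow_mul_exp_neg_mul_sq (b := 1) zero_lt_one
      (s := (m : ℝ)) (lt_of_lt_of_le neg_one_lt_zero (by positivity))
    have h2 : Integrable (fun x : ℝ => x ^ m * Real.exp (-x ^ 2)) := by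
      simpa [Real.rpow_natCast] using h
    simpa [Polynomial.eval_monomial, mul_assoc] using h2.const_mul a

lemma weight_eq (c x : ℝ) :
    Real.exp (-x ^ 2 + c * x)
      = Real.exp (c ^ 2 / 4) * Real.exp (-(x - c / 2) ^ 2) := by
  rw [← Real.exp_add]; ring_nf

lemma integrable_poly_w (P : Polynomial ℝ) (c : ℝ) :
    Integrable (fun x : ℝ => P.eval x * Real.exp (-x ^ 2 + c * x)) := by
  have key : Integrable (fun x : ℝ => P.eval (x + c / 2) * Real.exp (-x ^ 2)) := by
    have := integrable_poly_gauss (P.comp (X + C (c / 2)))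
    simpa [Polynomial.eval_comp] using this
  have h2 := key.comp_sub_right (c / 2)
  have h3 := h2.const_mul (Real.exp (c ^ 2 / 4))
  refine h3.congr ?_
  filter_upwards with x
  rw [weight_eq]
  ring_nf

lemma tendsto_poly_w_atTop (P : Polynomial ℝ) (c : ℝ) :
    Tendsto (fun x : ℝ => P.eval x * Real.exp (-x ^ 2 + c * x)) atTop (nhds 0) := by
  have hb : Tendsto (fun x : ℝ => P.eval x / Real.exp x) atTop (nhds 0) :=
    P.tendsto_div_exp_atTop
  refine squeeze_zero_norm' ?_ (by simpa using hb.norm)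
  filter_upwards [Filter.eventually_ge_atTop (max (c + 1) 0)] with x hx
  have hx0 : 0 ≤ x := le_trans (le_max_right _ _) hx
  have hle : -x ^ 2 + c * x ≤ -x := by nlinarith [le_trans (le_max_left (c+1) 0) hx]
  have : Real.exp (-x ^ 2 + c * x) ≤ Real.exp (-x) := Real.exp_le_exp.mpr hle
  rw [norm_mul, Real.norm_eq_abs (Real.exp _), Real.abs_exp, div_eq_mul_inv, ← Real.exp_neg,
    Real.norm_eq_abs]
  exact mul_le_mul_of_nonneg_left this (abs_nonneg _)

lemma tendsto_poly_w_atBot (P : Polynomial ℝ) (c : ℝ) :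
    Tendsto (fun x : ℝ => P.eval x * Real.exp (-x ^ 2 + c * x)) atBot (nhds 0) := by
  have h := tendsto_poly_w_atTop (P.comp (-X)) (-c)
  have h2 := h.comp tendsto_neg_atBot_atTop
  refine h2.congr ?_
  intro x
  simp only [Function.comp_apply, Polynomial.eval_comp, Polynomial.eval_neg, Polynomial.eval_X]
  ring_nf

/-- The basic integral functional. -/
noncomputable def I (P : Polynomial ℝ) (c : ℝ) : ℝ :=
  ∫ x : ℝ, P.eval x * Real.exp (-x ^ 2 + c * x)

lemma hasDerivAt_poly_w (P : Polynomial ℝ) (c x : ℝ) :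
    HasDerivAt (fun y : ℝ => P.eval y * Real.exp (-y ^ 2 + c * y))
      ((derivative P + (C c - 2 * X) * P).eval x * Real.exp (-x ^ 2 + c * x)) x := by
  have h1 : HasDerivAt (fun y : ℝ => -y ^ 2 + c * y) (-(2 * x) + c) x := by
    have := ((hasDerivAt_pow 2 x).neg).add ((hasDerivAt_id x).const_mul c)
    exact this.congr_deriv (by norm_num)
  have h2 := h1.exp
  have h3 := (P.hasDerivAt x).mul h2
  refine h3.congr_deriv ?_
  simp only [Polynomial.eval_add, Polynomial.eval_mul, Polynomial.eval_sub,
    Polynomial.eval_C, Polynomial.eval_X, Polynomial.eval_ofNat]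
  ring

lemma I_ibp (P : Polynomial ℝ) (c : ℝ) :
    I (derivative P + (C c - 2 * X) * P) c = 0 := by
  set g : ℝ → ℝ := fun x =>
    (derivative P + (C c - 2 * X) * P).eval x * Real.exp (-x ^ 2 + c * x) with hg
  set f : ℝ → ℝ := fun x => P.eval x * Real.exp (-x ^ 2 + c * x) with hf
  have hderiv : ∀ x : ℝ, HasDerivAt f (g x) x := fun x => hasDerivAt_poly_w P c x
  have hint := integrable_poly_w (derivative P + (C c - 2 * X) * P) c
  have h1 : ∫ x in Set.Iic (0:ℝ), g x = f 0 - 0 :=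
    integral_Iic_of_hasDerivAt_of_tendsto' (fun x _ => hderiv x)
      hint.integrableOn (tendsto_poly_w_atBot P c)
  have h2 : ∫ x in Set.Ioi (0:ℝ), g x = 0 - f 0 :=
    integral_Ioi_of_hasDerivAt_of_tendsto' (fun x _ => hderiv x)
      hint.integrableOn (tendsto_poly_w_atTop P c)
  have h3 := intervalIntegral.integral_Iic_add_Ioi (b := (0:ℝ))
    hint.integrableOn hint.integrableOn
  rw [I, ← h3, h1, h2]
  ring

lemma I_add (P Q : Polynomial ℝ) (c : ℝ) : I (P + Q) c = I P c + I Q c := by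
  rw [I, I, I, ← integral_add (integrable_poly_w P c) (integrable_poly_w Q c)]
  congr 1; funext x; simp [add_mul]

lemma I_Cmul (a : ℝ) (P : Polynomial ℝ) (c : ℝ) : I (C a * P) c = a * I P c := by
  rw [I, I, ← MeasureTheory.integral_const_mul]
  congr 1; funext x; simp [mul_assoc]

lemma I_sum {α : Type*} (s : Finset α) (f : α → Polynomial ℝ) (c : ℝ) :
    I (∑ i ∈ s, f i) c = ∑ i ∈ s, I (f i) c := by
  induction s using Finset.cons_induction with
  | empty => simp [I]
  | cons a s ha ih => rw [Finset.sum_cons, Finset.sum_cons, I_add, ih]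

/-- The operator `T R = R' + (X/2) R`. -/
noncomputable def T (R : Polynomial ℝ) : Polynomial ℝ :=
  derivative R + C (2⁻¹ : ℝ) * X * R

lemma T_add (R S : Polynomial ℝ) : T (R + S) = T R + T S := by
  simp [T]; ring

lemma T_Cmul (a : ℝ) (R : Polynomial ℝ) : T (C a * R) = C a * T R := by
  simp [T, derivative_C_mul]; ring

/-- Moment polynomials: `∫ xᵐ e^{-x²+cx} dx = √π e^{c²/4} qₘ(c)`. -/
noncomputable def q : ℕ → Polynomial ℝ
  | 0 => 1
  | m + 1 => T (q m)

lemma q_zero : q 0 = 1 := rfl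

lemma q_succ (m : ℕ) : q (m + 1) = derivative (q m) + C (2⁻¹ : ℝ) * X * q m := rfl

lemma q_deriv : ∀ m : ℕ, derivative (q (m + 1)) = C (((m : ℝ) + 1) / 2) * q m := by
  intro m
  induction m with
  | zero =>
    show derivative (T 1) = _
    simp [T, q_zero]
  | succ m ih =>
    have ih' : derivative (derivative (q (m + 1))) = C (((m : ℝ) + 1) / 2) * derivative (q m) := by
      rw [ih, derivative_C_mul]
    show derivative (T (q (m + 1))) = _
    rw [T, derivative_add, derivative_mul, derivative_mul, derivative_C, derivative_X, ih', ih,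
      q_succ]
    apply Polynomial.funext
    intro z
    simp only [eval_add, eval_mul, eval_C, eval_X, eval_zero, eval_one, Nat.cast_succ]
    push_cast
    ring

lemma q_coeff_natDegree : ∀ m : ℕ, (q m).natDegree ≤ m ∧ (q m).coeff m = (2⁻¹ : ℝ) ^ m := by
  intro m
  induction m with
  | zero => simp [q_zero]
  | succ m ih =>
    obtain ⟨h1, h2⟩ := ih
    show (T (q m)).natDegree ≤ m + 1 ∧ (T (q m)).coeff (m + 1) = _
    have hd : (derivative (q m)).natDegree ≤ m := le_trans (natDegree_derivative_le _)
      (by omega)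
    have hx : (C (2⁻¹ : ℝ) * X * q m).natDegree ≤ m + 1 := by
      refine le_trans (natDegree_mul_le) ?_
      have : (C (2⁻¹ : ℝ) * X).natDegree ≤ 1 := le_trans natDegree_mul_le (by simp)
      omega
    constructor
    · exact le_trans (natDegree_add_le _ _) (by omega)
    · rw [T, coeff_add, coeff_eq_zero_of_natDegree_lt (lt_of_le_of_lt hd (by omega)),
        zero_add, mul_assoc, coeff_C_mul, coeff_X_mul, h2]
      ring

lemma I_one (c : ℝ) : I 1 c = Real.sqrt π * Real.exp (c ^ 2 / 4) := by
  have hg : ∫ x : ℝ, Real.exp (-(x - c / 2) ^ 2) = Real.sqrt π := by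
    rw [show (fun x : ℝ => Real.exp (-(x - c / 2) ^ 2))
        = fun x : ℝ => Real.exp (-1 * (x - c / 2) ^ 2) by funext x; ring_nf]
    rw [integral_sub_right_eq_self (μ := volume) (fun x : ℝ => Real.exp (-1 * x ^ 2)) (c / 2),
      integral_gaussian]
    simp
  rw [I]
  simp only [eval_one, one_mul]
  calc ∫ x : ℝ, Real.exp (-x ^ 2 + c * x)
      = ∫ x : ℝ, Real.exp (c ^ 2 / 4) * Real.exp (-(x - c / 2) ^ 2) := by
        congr 1; funext x; exact weight_eq c x
    _ = Real.exp (c ^ 2 / 4) * ∫ x : ℝ, Real.exp (-(x - c / 2) ^ 2) :=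
        MeasureTheory.integral_const_mul _ _
    _ = Real.sqrt π * Real.exp (c ^ 2 / 4) := by rw [hg]; ring

lemma I_X_pow (m : ℕ) (c : ℝ) :
    I (X ^ m) c = Real.sqrt π * Real.exp (c ^ 2 / 4) * (q m).eval c := by
  induction m using Nat.strong_induction_on with
  | _ m IH =>
    match m with
    | 0 => simpa [q_zero] using I_one c
    | 1 =>
      have h := I_ibp 1 c
      rw [derivative_one, zero_add, mul_one, show C c - 2 * X = C c * 1 + C (-2) * X by
          rw [map_neg, map_ofNat]; ring,
        I_add, I_Cmul, I_Cmul, I_one] at h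
      have : I X c = Real.sqrt π * Real.exp (c ^ 2 / 4) * (c / 2) := by linarith
      rw [pow_one, this, q_succ]
      simp only [q_zero, derivative_one, eval_add, eval_mul, eval_C, eval_X, eval_zero,
        eval_one, zero_add, mul_one]
      ring
    | (m + 2) =>
      have h := I_ibp (X ^ (m + 1)) c
      have hid : derivative (X ^ (m + 1) : Polynomial ℝ) + (C c - 2 * X) * X ^ (m + 1)
          = C ((m : ℝ) + 1) * X ^ m + C c * X ^ (m + 1) + C (-2) * X ^ (m + 2) := by
        rw [derivative_X_pow, map_neg, map_ofNat]
        push_cast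
        ring
      rw [hid, I_add, I_add, I_Cmul, I_Cmul, I_Cmul, IH m (by omega), IH (m + 1) (by omega)] at h
      have hq2 : (q (m + 2)).eval c
          = ((m : ℝ) + 1) / 2 * (q m).eval c + c / 2 * (q (m + 1)).eval c := by
        rw [show q (m + 2) = q ((m + 1) + 1) by rfl, q_succ, q_deriv]
        push_cast
        simp only [eval_add, eval_mul, eval_C, eval_X]
        ring
      rw [hq2]
      linarith

/-- Transform of a polynomial shifted by `k`. -/
noncomputable def QQ (k : ℕ) (D : Polynomial ℝ) : Polynomial ℝ :=
  ∑ m ∈ Finset.range (D.natDegree + 1), C (D.coeff m) * q (k + m)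

lemma QQ_succ (k : ℕ) (D : Polynomial ℝ) : QQ (k + 1) D = T (QQ k D) := by
  rw [QQ, QQ]
  rw [show T (∑ m ∈ Finset.range (D.natDegree + 1), C (D.coeff m) * q (k + m))
      = ∑ m ∈ Finset.range (D.natDegree + 1), T (C (D.coeff m) * q (k + m)) by
    induction (Finset.range (D.natDegree + 1)) using Finset.cons_induction with
    | empty => simp [T]
    | cons a s ha ih => rw [Finset.sum_cons, Finset.sum_cons, T_add, ih]]
  refine Finset.sum_congr rfl fun m _ => ?_
  rw [T_Cmul]
  congr 1
  show _ = q ((k + m) + 1)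
  congr 1
  omega

lemma QQ_iterate (k : ℕ) (D : Polynomial ℝ) : T^[k] (QQ 0 D) = QQ k D := by
  induction k with
  | zero => simp
  | succ k ih => rw [Function.iterate_succ_apply', ih, QQ_succ]

lemma poly_as_sum (k : ℕ) (D : Polynomial ℝ) :
    X ^ k * D = ∑ m ∈ Finset.range (D.natDegree + 1), C (D.coeff m) * X ^ (k + m) := by
  conv_lhs => rw [D.as_sum_range' (D.natDegree + 1) (lt_add_one _)]
  rw [Finset.mul_sum]
  refine Finset.sum_congr rfl fun m _ => ?_
  rw [← Polynomial.C_mul_X_pow_eq_monomial, pow_add]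
  ring

lemma I_QQ (k : ℕ) (D : Polynomial ℝ) (c : ℝ) :
    I (X ^ k * D) c = Real.sqrt π * Real.exp (c ^ 2 / 4) * (QQ k D).eval c := by
  rw [poly_as_sum, I_sum, QQ, Polynomial.eval_finset_sum, Finset.mul_sum]
  refine Finset.sum_congr rfl fun m _ => ?_
  rw [I_Cmul, I_X_pow]
  simp only [eval_mul, eval_C]
  ring

lemma T_pow_mul (j m : ℕ) (hj : j ≤ m) (a : ℝ) (S : Polynomial ℝ) :
    ∃ (d : ℝ) (U : Polynomial ℝ), d ≠ 0 ∧
      T^[j] ((X - C a) ^ m * S)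
        = C d * (X - C a) ^ (m - j) * S + (X - C a) ^ (m - j + 1) * U := by
  induction j with
  | zero =>
    exact ⟨1, 0, one_ne_zero, by simp⟩
  | succ j ih =>
    obtain ⟨d, U, hd, hTj⟩ := ih (le_trans (Nat.le_succ j) hj)
    set t := m - (j + 1) with ht
    have h1 : m - j = t + 1 := by omega
    have h2 : m - j + 1 = t + 2 := by omega
    refine ⟨d * ((t : ℝ) + 1), C d * derivative S
      + C (2⁻¹ : ℝ) * X * C d * S + C ((t : ℝ) + 2) * U
      + (X - C a) * derivative U + C (2⁻¹ : ℝ) * X * (X - C a) * U, ?_, ?_⟩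
    · have : (0:ℝ) < (t : ℝ) + 1 := by positivity
      exact mul_ne_zero hd (by positivity)
    · rw [Function.iterate_succ_apply', hTj, h1, T]
      rw [derivative_add, derivative_mul, derivative_mul, derivative_mul,
        derivative_pow, derivative_pow, derivative_C, derivative_sub,
        derivative_X, derivative_C]
      apply Polynomial.funext
      intro z
      simp only [eval_add, eval_mul, eval_sub, eval_C, eval_X, eval_pow, eval_zero, eval_one]
      push_cast
      ring

lemma root_mult (k : ℕ) (a : ℝ) :
    ∀ Q : Polynomial ℝ, (∀ s ≤ k, (T^[s] Q).eval a = 0) → (X - C a) ^ (k + 1) ∣ Q := by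
  induction k with
  | zero =>
    intro Q hQ
    rw [pow_one, dvd_iff_isRoot]
    exact hQ 0 le_rfl
  | succ k ih =>
    intro Q hQ
    obtain ⟨S, hS⟩ := ih Q (fun s hs => hQ s (le_trans hs (Nat.le_succ k)))
    obtain ⟨d, U, hd, hT⟩ := T_pow_mul (k + 1) (k + 1) le_rfl a S
    have heval := hQ (k + 1) le_rfl
    rw [hS, hT] at heval
    simp only [Nat.sub_self, pow_zero, mul_one, zero_add, pow_one, eval_add, eval_mul,
      eval_sub, eval_C, eval_X, one_mul, sub_self, zero_mul, add_zero] at heval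
    have hSa : S.eval a = 0 := by
      rcases mul_eq_zero.mp heval with h | h
      · exact absurd h hd
      · exact h
    obtain ⟨S', hS'⟩ := (dvd_iff_isRoot).mpr hSa
    exact ⟨S', by rw [hS, hS', pow_succ]; ring⟩

lemma QQ_zero_ne (D : Polynomial ℝ) (hD : D ≠ 0) : QQ 0 D ≠ 0 := by
  intro h
  have hcoeff : (QQ 0 D).coeff D.natDegree = D.coeff D.natDegree * (2⁻¹ : ℝ) ^ D.natDegree := by
    rw [QQ, Polynomial.finset_sum_coeff]
    rw [Finset.sum_eq_single D.natDegree]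
    · rw [coeff_C_mul, zero_add, (q_coeff_natDegree D.natDegree).2]
    · intro m hm hne
      rw [coeff_C_mul, zero_add,
        coeff_eq_zero_of_natDegree_lt (lt_of_le_of_lt (q_coeff_natDegree m).1 ?_), mul_zero]
      exact lt_of_le_of_ne (Nat.lt_succ_iff.mp (Finset.mem_range.mp hm)) hne
    · intro hmem
      exact absurd (Finset.self_mem_range_succ D.natDegree) hmem
  rw [h, Polynomial.coeff_zero] at hcoeff
  have := Polynomial.leadingCoeff_ne_zero.mpr hD
  rw [Polynomial.leadingCoeff] at this
  exact this (by
    have h2 : (2⁻¹ : ℝ) ^ D.natDegree ≠ 0 := by positivity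
    field_simp at hcoeff
    simpa using hcoeff.symm)

lemma QQ_zero_natDegree_le (D : Polynomial ℝ) : (QQ 0 D).natDegree ≤ D.natDegree := by
  refine le_trans (Polynomial.natDegree_sum_le _ _) ?_
  rw [Finset.fold_max_le]
  refine ⟨Nat.zero_le _, fun m hm => ?_⟩
  refine le_trans natDegree_mul_le ?_
  have h1 := (q_coeff_natDegree (0 + m)).1
  have hm' : m ≤ D.natDegree := Nat.lt_succ_iff.mp (Finset.mem_range.mp hm)
  simp only [natDegree_C, zero_add] at *
  omega

lemma perfect {r : ℕ} (c : Fin r → ℝ) (hc : Function.Injective c) (m : Fin r → ℕ)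
    (D : Polynomial ℝ) (hdeg : D.natDegree < ∑ i, m i)
    (horth : ∀ i : Fin r, ∀ s, s < m i → I (X ^ s * D) (c i) = 0) : D = 0 := by
  by_contra hD
  have hK : ∀ x : ℝ, Real.sqrt π * Real.exp (x ^ 2 / 4) ≠ 0 := by
    intro x
    have : (0:ℝ) < Real.sqrt π := Real.sqrt_pos.mpr Real.pi_pos
    positivity
  have heval : ∀ i : Fin r, ∀ s, s < m i → (T^[s] (QQ 0 D)).eval (c i) = 0 := by
    intro i s hs
    have := horth i s hs
    rw [I_QQ] at this
    rw [QQ_iterate]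
    exact (mul_eq_zero.mp this).resolve_left (hK (c i))
  have hdvd : ∀ i : Fin r, (X - C (c i)) ^ (m i) ∣ QQ 0 D := by
    intro i
    rcases Nat.eq_zero_or_pos (m i) with h0 | hpos
    · rw [h0, pow_zero]; exact one_dvd _
    · obtain ⟨k, hk⟩ := Nat.exists_eq_add_of_lt hpos
      have : m i = (m i - 1) + 1 := by omega
      rw [this]
      exact root_mult (m i - 1) (c i) (QQ 0 D) (fun s hs => heval i s (by omega))
  have hprod : (∏ i : Fin r, (X - C (c i)) ^ (m i)) ∣ QQ 0 D := by
    refine Finset.prod_dvd_of_coprime ?_ (fun i _ => hdvd i)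
    intro i _ k _ hik
    exact ((Polynomial.pairwise_coprime_X_sub_C hc hik).pow)
  have hdegprod : (∏ i : Fin r, (X - C (c i)) ^ (m i)).natDegree = ∑ i, m i := by
    rw [Polynomial.natDegree_prod]
    · exact Finset.sum_congr rfl fun i _ => by
        rw [Polynomial.natDegree_pow, Polynomial.natDegree_X_sub_C, mul_one]
    · intro i _
      exact pow_ne_zero _ (Polynomial.X_sub_C_ne_zero _)
  have := Polynomial.natDegree_le_of_dvd hprod (QQ_zero_ne D hD)
  rw [hdegprod] at this
  have := QQ_zero_natDegree_le D
  omega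

lemma I_sub (P Q : Polynomial ℝ) (c : ℝ) : I (P - Q) c = I P c - I Q c := by
  rw [I, I, I, ← integral_sub (integrable_poly_w P c) (integrable_poly_w Q c)]
  congr 1; funext x; simp [sub_mul]

lemma orth_I {r : ℕ} {c : Fin r → ℝ} {n : Fin r → ℕ} {P : Polynomial ℝ}
    (h : IsMultipleHermite c n P) (i : Fin r) (k : ℕ) (hk : k < n i) :
    I (X ^ k * P) (c i) = 0 := by
  have := h.2.2 i k hk
  rw [I, ← this]
  congr 1; funext x; simp [mul_assoc]

lemma sum_unitMI {r : ℕ} (j : Fin r) (n : Fin r → ℕ) :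
    ∑ i, (n + unitMI j) i = (∑ i, n i) + 1 := by
  simp only [Pi.add_apply, Finset.sum_add_distrib]
  congr 1
  simp [unitMI]

lemma raising {r : ℕ} (c : Fin r → ℝ) (hc : Function.Injective c)
    (H : (Fin r → ℕ) → Polynomial ℝ) (hH : ∀ n, IsMultipleHermite c n (H n))
    (n : Fin r → ℕ) (j : Fin r) :
    derivative (H n) = (2 * X - C (c j)) * H n - 2 * H (n + unitMI j) := by
  set N := ∑ i, n i with hN
  set Hn := H n with hHn
  set He := H (n + unitMI j) with hHe
  have hn := hH n
  have he := hH (n + unitMI j)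
  have hNe : He.natDegree = N + 1 := by rw [he.2.1, sum_unitMI]
  have hNn : Hn.natDegree = N := hn.2.1
  set D := derivative Hn + 2 * He - (2 * X - C (c j)) * Hn with hD
  -- degree bound
  have hdegD : D.natDegree ≤ N := by
    rw [Polynomial.natDegree_le_iff_coeff_eq_zero]
    intro t ht
    obtain ⟨s, rfl⟩ : ∃ s, t = s + 1 := ⟨t - 1, by omega⟩
    have hds : (derivative Hn).coeff (s + 1) = 0 := by
      refine coeff_eq_zero_of_natDegree_lt (lt_of_le_of_lt (natDegree_derivative_le _) ?_)
      omega
    have hcn1 : Hn.coeff (s + 1) = 0 :=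
      coeff_eq_zero_of_natDegree_lt (by omega)
    have h2X : ((2 * X - C (c j)) * Hn).coeff (s + 1)
        = 2 * Hn.coeff s - c j * Hn.coeff (s + 1) := by
      rw [sub_mul, Polynomial.coeff_sub, mul_assoc, Polynomial.coeff_ofNat_mul,
        Polynomial.coeff_X_mul, Polynomial.coeff_C_mul]
    rw [hD, Polynomial.coeff_sub, Polynomial.coeff_add, hds, h2X, Polynomial.coeff_ofNat_mul,
      hcn1, zero_add, mul_zero, sub_zero]
    rcases eq_or_lt_of_le (show N ≤ s by omega) with hNs | hNs
    · have h1 : He.coeff (s + 1) = 1 := by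
        have := he.1.coeff_natDegree
        rwa [hNe, show N + 1 = s + 1 by omega] at this
      have h2 : Hn.coeff s = 1 := by
        have := hn.1.coeff_natDegree
        rwa [hNn, hNs] at this
      rw [h1, h2]
      ring
    · rw [coeff_eq_zero_of_natDegree_lt (by omega),
        coeff_eq_zero_of_natDegree_lt (by omega)]
      ring
  -- orthogonality
  have horth : ∀ i : Fin r, ∀ k, k < (n + unitMI j) i → I (X ^ k * D) (c i) = 0 := by
    intro i k hk
    have hkey : X ^ k * D
        = (derivative (X ^ k * Hn) + (C (c i) - 2 * X) * (X ^ k * Hn))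
          + C 2 * (X ^ k * He) + C (c j - c i) * (X ^ k * Hn)
          - C (k : ℝ) * (X ^ (k - 1) * Hn) := by
      rw [derivative_mul, derivative_X_pow]
      apply Polynomial.funext
      intro z
      simp only [hD, eval_add, eval_sub, eval_mul, eval_pow, eval_C, eval_X,
        eval_ofNat]
      ring
    rw [hkey, I_sub, I_add, I_add, I_ibp, I_Cmul, I_Cmul, I_Cmul, zero_add]
    have hki : k ≤ n i := by
      have : (n + unitMI j) i = n i + (if i = j then 1 else 0) := rfl
      by_cases hij : i = j <;> simp [hij, unitMI] at hk ⊢ <;> omega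
    have hHe0 : I (X ^ k * He) (c i) = 0 := by
      refine orth_I he i k ?_
      have : (n + unitMI j) i = n i + unitMI j i := rfl
      omega
    have hlast : (k : ℝ) * I (X ^ (k - 1) * Hn) (c i) = 0 := by
      rcases Nat.eq_zero_or_pos k with h0 | hpos
      · rw [h0]; simp
      · rw [orth_I hn i (k - 1) (by omega), mul_zero]
    rw [hHe0, mul_zero]
    by_cases hij : i = j
    · subst hij
      linear_combination -hlast
    · have h0 : I (X ^ k * Hn) (c i) = 0 := by
        refine orth_I hn i k ?_
        have hval : (n + unitMI j) i = n i + (if i = j then 1 else 0) := rfl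
        simp only [unitMI, hij, if_false] at hk hval ⊢
        omega
      linear_combination (c j - c i) * h0 - hlast
  -- conclude
  have hD0 : D = 0 := by
    refine perfect c hc (n + unitMI j) D ?_ horth
    rw [sum_unitMI]
    omega
  have : derivative Hn + 2 * He - (2 * X - C (c j)) * Hn = 0 := hD0
  linear_combination this

/-- Coefficients expressing iterated derivatives of `H` in terms of shifted `H`'s. -/
noncomputable def acoef (cj : ℝ) : ℕ → ℕ → Polynomial ℝ
  | 0, s => if s = 0 then 1 else 0
  | i + 1, s => derivative (acoef cj i s) + (2 * X - C cj) * acoef cj i s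
      - 2 * (if s = 0 then 0 else acoef cj i (s - 1))

lemma acoef_hi (cj : ℝ) : ∀ i s : ℕ, i < s → acoef cj i s = 0 := by
  intro i
  induction i with
  | zero => intro s hs; rw [acoef, if_neg (by omega : s ≠ 0)]
  | succ i ih =>
    intro s hs
    have h0 : s ≠ 0 := by omega
    rw [acoef, ih s (by omega), ih (s - 1) (by omega), if_neg h0]
    simp

lemma acoef_diag (cj : ℝ) : ∀ i : ℕ, acoef cj i i = (-2 : Polynomial ℝ) ^ i := by
  intro i
  induction i with
  | zero => simp [acoef]
  | succ i ih =>
    rw [acoef, if_neg (Nat.succ_ne_zero i), Nat.add_sub_cancel, ih,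
      acoef_hi cj i (i + 1) (by omega)]
    simp [pow_succ]
    ring

lemma shift_index {r : ℕ} (n : Fin r → ℕ) (j : Fin r) (m : ℕ) :
    (n + m • unitMI j) + unitMI j = n + (m + 1) • unitMI j := by
  funext i
  simp only [Pi.add_apply, Pi.smul_apply, smul_eq_mul]
  ring

lemma sum_shift {R : Type*} [CommRing R] (i : ℕ) (A a b Hk : ℕ → R)
    (hA0 : A (i + 1) = 0)
    (hb0 : b 0 = A 0)
    (hbs : ∀ s, b (s + 1) = A (s + 1) - 2 * a s) :
    (∑ s ∈ Finset.range (i + 1), A s * Hk s)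
      + (∑ s ∈ Finset.range (i + 1), (-2) * (a s * Hk (s + 1)))
      = ∑ s ∈ Finset.range (i + 1 + 1), b s * Hk s := by
  rw [Finset.sum_range_succ' (fun s => b s * Hk s) (i + 1),
    Finset.sum_range_succ' (fun s => A s * Hk s) i]
  have hext : ∑ s ∈ Finset.range (i + 1), A (s + 1) * Hk (s + 1)
      = ∑ s ∈ Finset.range i, A (s + 1) * Hk (s + 1) := by
    rw [Finset.sum_range_succ, hA0, zero_mul, add_zero]
  rw [← hext, hb0]
  have : ∀ s ∈ Finset.range (i + 1),
      b (s + 1) * Hk (s + 1) = A (s + 1) * Hk (s + 1) + (-2) * (a s * Hk (s + 1)) := by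
    intro s _
    rw [hbs s]
    ring
  rw [Finset.sum_congr rfl this, Finset.sum_add_distrib]
  ring

lemma expansion {r : ℕ} (c : Fin r → ℝ) (hc : Function.Injective c)
    (H : (Fin r → ℕ) → Polynomial ℝ) (hH : ∀ n, IsMultipleHermite c n (H n))
    (n : Fin r → ℕ) (j : Fin r) :
    ∀ i k : ℕ, derivative^[i] (H (n + k • unitMI j))
      = ∑ s ∈ Finset.range (i + 1), acoef (c j) i s * H (n + (k + s) • unitMI j) := by
  intro i
  induction i with
  | zero =>
    intro k
    rw [Function.iterate_zero, id_eq, show (0:ℕ) + 1 = 1 from rfl, Finset.range_one,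
      Finset.sum_singleton]
    norm_num [acoef]
  | succ i ih =>
    intro k
    rw [Function.iterate_succ_apply', ih k, derivative_sum]
    have hterm : ∀ s ∈ Finset.range (i + 1),
        derivative (acoef (c j) i s * H (n + (k + s) • unitMI j))
          = (derivative (acoef (c j) i s)
              + (2 * X - C (c j)) * acoef (c j) i s) * H (n + (k + s) • unitMI j)
            + (-2) * (acoef (c j) i s * H (n + (k + (s + 1)) • unitMI j)) := by
      intro s _
      rw [derivative_mul, raising c hc H hH (n + (k + s) • unitMI j) j,
        shift_index, show k + s + 1 = k + (s + 1) by omega]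
      ring
    rw [Finset.sum_congr rfl hterm, Finset.sum_add_distrib]
    refine sum_shift i
      (fun s => derivative (acoef (c j) i s) + (2 * X - C (c j)) * acoef (c j) i s)
      (fun s => acoef (c j) i s)
      (fun s => acoef (c j) (i + 1) s)
      (fun s => H (n + (k + s) • unitMI j)) ?_ ?_ ?_
    · simp only [acoef_hi (c j) i (i + 1) (by omega)]
      simp
    · simp [acoef]
    · intro s
      simp only [acoef, Nat.succ_ne_zero, if_false, Nat.add_sub_cancel]
      try ring

end MHAux

end MHAuxSection

open MHAux

/-- the Wronskian of the multiple Hermite polynomials along the path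
`(n, n+e_j, …, n+(l−1)e_j)` equals `(−2)^(l(l−1)/2)` times the Hankel determinant
`det (H_{n+(i+k)e_j}(x))_{i,k<l}`. -/
theorem multipleHermite_wronskian_eq_hankel {r : ℕ} (hr : 1 ≤ r)
    (c : Fin r → ℝ) (hc : Function.Injective c)
    (H : (Fin r → ℕ) → Polynomial ℝ) (hH : ∀ n, IsMultipleHermite c n (H n))
    (n : Fin r → ℕ) (j : Fin r) (l : ℕ) (hl : 1 ≤ l) (x : ℝ) :
    Matrix.det (Matrix.of fun i k : Fin l =>
        (Polynomial.derivative^[(i : ℕ)] (H (n + (k : ℕ) • unitMI j))).eval x) =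
      (-2 : ℝ) ^ (l * (l - 1) / 2) *
        Matrix.det (Matrix.of fun i k : Fin l =>
          (H (n + ((i : ℕ) + (k : ℕ)) • unitMI j)).eval x) := by
  set A : Matrix (Fin l) (Fin l) ℝ :=
    Matrix.of fun i s : Fin l => (acoef (c j) (i : ℕ) (s : ℕ)).eval x with hA
  set M : Matrix (Fin l) (Fin l) ℝ :=
    Matrix.of fun s k : Fin l => (H (n + ((s : ℕ) + (k : ℕ)) • unitMI j)).eval x with hM
  have hW : (Matrix.of fun i k : Fin l =>
      (Polynomial.derivative^[(i : ℕ)] (H (n + (k : ℕ) • unitMI j))).eval x) = A * M := by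
    ext i k
    rw [Matrix.mul_apply, Matrix.of_apply, expansion c hc H hH n j (i : ℕ) (k : ℕ),
      Polynomial.eval_finset_sum]
    have h1 : ∀ s ∈ Finset.range ((i : ℕ) + 1),
        ((acoef (c j) (i : ℕ) s * H (n + ((k : ℕ) + s) • unitMI j)).eval x)
          = (acoef (c j) (i : ℕ) s).eval x
            * (H (n + (s + (k : ℕ)) • unitMI j)).eval x := by
      intro s _
      rw [Polynomial.eval_mul, Nat.add_comm (k : ℕ) s]
    rw [Finset.sum_congr rfl h1]
    have h2 : ∑ s ∈ Finset.range ((i : ℕ) + 1),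
        (acoef (c j) (i : ℕ) s).eval x * (H (n + (s + (k : ℕ)) • unitMI j)).eval x
        = ∑ s ∈ Finset.range l,
          (acoef (c j) (i : ℕ) s).eval x * (H (n + (s + (k : ℕ)) • unitMI j)).eval x := by
      refine Finset.sum_subset ?_ ?_
      · intro t hti
        rw [Finset.mem_range] at *
        have := i.isLt
        omega
      · intro t _ ht
        rw [Finset.mem_range] at ht
        rw [acoef_hi (c j) (i : ℕ) t (by omega), Polynomial.eval_zero, zero_mul]
    rw [h2, ← Fin.sum_univ_eq_sum_range (fun s =>
      (acoef (c j) (i : ℕ) s).eval x * (H (n + (s + (k : ℕ)) • unitMI j)).eval x) l]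
    rfl
  rw [hW, Matrix.det_mul]
  have hAtri : A.BlockTriangular OrderDual.toDual := by
    intro i s his
    have : (i : ℕ) < (s : ℕ) := his
    rw [hA, Matrix.of_apply, acoef_hi (c j) _ _ this, Polynomial.eval_zero]
  have hdetA : A.det = (-2 : ℝ) ^ (l * (l - 1) / 2) := by
    rw [Matrix.det_of_lowerTriangular A hAtri]
    have : ∀ i : Fin l, A i i = (-2 : ℝ) ^ (i : ℕ) := by
      intro i
      rw [hA, Matrix.of_apply, acoef_diag]
      simp
    rw [Finset.prod_congr rfl (fun i _ => this i), Finset.prod_pow_eq_pow_sum]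
    congr 1
    rw [Fin.sum_univ_eq_sum_range (fun i => i) l, Finset.sum_range_id]
  rw [hdetA]
end

section
/- For r = 2, n⃗ = (1,1), and α⃗ = (1/2, 1/3), the naive Turán expression for the multiple Laguerre polynomials of the first kind equals the explicit quintic polynomial (L_{(2,1)}^{α⃗}(x))² − L_{(1,1)}^{α⃗}(x) · L_{(3,1)}^{α⃗}(x) = 2x⁵ − (119/6)x⁴ + (647/9)x³ − (7495/72)x² + (185/3)x − 10, and this polynomial takes both strictly positive and strictly negative values on (0, ∞); in particular, the inequality (L_{n+1,m}^{α⃗}(x))² − L_{n,m}^{α⃗}(x) · L_{n+2,m}^{α⃗}(x) > 0 for all x > 0 fails for multiple Laguerre polynomials of the first kind. -/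
open MeasureTheory Polynomial Finset

/-- `P` is the multiple Laguerre polynomial of the first kind for the parameters `α`
and the multi-index `n`: it is monic of degree `|n|` and satisfies
`∫_0^∞ x^k P(x) x^(α j) exp(-x) dx = 0` for all `k < n j` and all `j`. -/
def IsMultipleLaguerreI {r : ℕ} (α : Fin r → ℝ) (n : Fin r → ℕ)
    (P : Polynomial ℝ) : Prop :=
  P.Monic ∧ P.natDegree = ∑ i, n i ∧
    ∀ j : Fin r, ∀ k < n j,
      ∫ x in Set.Ioi (0 : ℝ), x ^ k * P.eval x * (x ^ (α j) * Real.exp (-x)) = 0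

/-- The `j`-th standard unit vector `e⃗_j` in `ℝ^r`. -/
def unitR {r : ℕ} (j : Fin r) : Fin r → ℝ := fun i => if i = j then 1 else 0

lemma moment_eq (P : Polynomial ℝ) (β : ℝ) (hβ : 0 < β + 1) (k : ℕ) :
    ∫ x in Set.Ioi (0:ℝ), x ^ k * P.eval x * (x ^ β * Real.exp (-x)) =
      ∑ i ∈ Finset.range (P.natDegree + 1),
        P.coeff i * Real.Gamma (β + k + i + 1) := by
  have hint : ∀ i : ℕ, IntegrableOn
      (fun x : ℝ => P.coeff i * (Real.exp (-x) * x ^ (β + k + i))) (Set.Ioi 0) := by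
    intro i
    have h := Real.GammaIntegral_convergent (s := β + k + i + 1)
      (by have h1 : (0:ℝ) ≤ k := Nat.cast_nonneg k
          have h2 : (0:ℝ) ≤ i := Nat.cast_nonneg i
          linarith)
    have h' := h.const_mul (P.coeff i); simp at h'; exact h'
  calc ∫ x in Set.Ioi (0:ℝ), x ^ k * P.eval x * (x ^ β * Real.exp (-x))
      = ∫ x in Set.Ioi (0:ℝ), ∑ i ∈ Finset.range (P.natDegree + 1),
          P.coeff i * (Real.exp (-x) * x ^ (β + k + i)) := by
        refine setIntegral_congr_fun measurableSet_Ioi fun x hx => ?_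
        have hx' : (0:ℝ) < x := hx
        rw [Polynomial.eval_eq_sum_range, Finset.mul_sum, Finset.sum_mul]
        refine Finset.sum_congr rfl fun i _ => ?_
        rw [Real.rpow_add hx', Real.rpow_add hx', Real.rpow_natCast, Real.rpow_natCast]
        ring
    _ = ∑ i ∈ Finset.range (P.natDegree + 1),
          ∫ x in Set.Ioi (0:ℝ), P.coeff i * (Real.exp (-x) * x ^ (β + k + i)) := by
        exact integral_finset_sum _ fun i _ => hint i
    _ = ∑ i ∈ Finset.range (P.natDegree + 1),
          P.coeff i * Real.Gamma (β + k + i + 1) := by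
        refine Finset.sum_congr rfl fun i _ => ?_
        rw [MeasureTheory.integral_const_mul,
          Real.Gamma_eq_integral (by
            have h1 : (0:ℝ) ≤ k := Nat.cast_nonneg k
            have h2 : (0:ℝ) ≤ i := Nat.cast_nonneg i
            linarith)]
        norm_num

set_option maxHeartbeats 2000000 in
/-- for `r = 2`, `n⃗ = (1,1)` and `α⃗ = (1/2, 1/3)`, the naive Turán
expression for the multiple Laguerre polynomials of the first kind equals the explicit
quintic `2x⁵ − (119/6)x⁴ + (647/9)x³ − (7495/72)x² + (185/3)x − 10`, which takes both
strictly positive and strictly negative values on `(0, ∞)`; in particular the naive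
Turán inequality fails for multiple Laguerre polynomials of the first kind. -/
theorem multipleLaguerreI_naive_turan_fails
    (P11 P21 P31 : Polynomial ℝ)
    (h11 : IsMultipleLaguerreI (r := 2) ![1/2, 1/3] ![1, 1] P11)
    (h21 : IsMultipleLaguerreI (r := 2) ![1/2, 1/3] ![2, 1] P21)
    (h31 : IsMultipleLaguerreI (r := 2) ![1/2, 1/3] ![3, 1] P31) :
    (∀ x : ℝ, P21.eval x ^ 2 - P11.eval x * P31.eval x =
        2 * x ^ 5 - 119 / 6 * x ^ 4 + 647 / 9 * x ^ 3 - 7495 / 72 * x ^ 2 +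
          185 / 3 * x - 10) ∧
    (∃ x : ℝ, 0 < x ∧ 0 < P21.eval x ^ 2 - P11.eval x * P31.eval x) ∧
    (∃ x : ℝ, 0 < x ∧ P21.eval x ^ 2 - P11.eval x * P31.eval x < 0) ∧
    ¬ (∀ x : ℝ, 0 < x → 0 < P21.eval x ^ 2 - P11.eval x * P31.eval x) := by
  -- Gamma facts
  have hg : 0 < Real.Gamma (3/2 : ℝ) := Real.Gamma_pos_of_pos (by norm_num)
  have hh : 0 < Real.Gamma (4/3 : ℝ) := Real.Gamma_pos_of_pos (by norm_num)
  have G1 : Real.Gamma (5/2 : ℝ) = 3/2 * Real.Gamma (3/2) := by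
    rw [show (5/2:ℝ) = 3/2 + 1 by norm_num, Real.Gamma_add_one (by norm_num)]
  have G2 : Real.Gamma (7/2 : ℝ) = 15/4 * Real.Gamma (3/2) := by
    rw [show (7/2:ℝ) = 5/2 + 1 by norm_num, Real.Gamma_add_one (by norm_num), G1]; ring
  have G3 : Real.Gamma (9/2 : ℝ) = 105/8 * Real.Gamma (3/2) := by
    rw [show (9/2:ℝ) = 7/2 + 1 by norm_num, Real.Gamma_add_one (by norm_num), G2]; ring
  have G4 : Real.Gamma (11/2 : ℝ) = 945/16 * Real.Gamma (3/2) := by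
    rw [show (11/2:ℝ) = 9/2 + 1 by norm_num, Real.Gamma_add_one (by norm_num), G3]; ring
  have G5 : Real.Gamma (13/2 : ℝ) = 10395/32 * Real.Gamma (3/2) := by
    rw [show (13/2:ℝ) = 11/2 + 1 by norm_num, Real.Gamma_add_one (by norm_num), G4]; ring
  have G6 : Real.Gamma (15/2 : ℝ) = 135135/64 * Real.Gamma (3/2) := by
    rw [show (15/2:ℝ) = 13/2 + 1 by norm_num, Real.Gamma_add_one (by norm_num), G5]; ring
  have H1 : Real.Gamma (7/3 : ℝ) = 4/3 * Real.Gamma (4/3) := by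
    rw [show (7/3:ℝ) = 4/3 + 1 by norm_num, Real.Gamma_add_one (by norm_num)]
  have H2 : Real.Gamma (10/3 : ℝ) = 28/9 * Real.Gamma (4/3) := by
    rw [show (10/3:ℝ) = 7/3 + 1 by norm_num, Real.Gamma_add_one (by norm_num), H1]; ring
  have H3 : Real.Gamma (13/3 : ℝ) = 280/27 * Real.Gamma (4/3) := by
    rw [show (13/3:ℝ) = 10/3 + 1 by norm_num, Real.Gamma_add_one (by norm_num), H2]; ring
  have H4 : Real.Gamma (16/3 : ℝ) = 3640/81 * Real.Gamma (4/3) := by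
    rw [show (16/3:ℝ) = 13/3 + 1 by norm_num, Real.Gamma_add_one (by norm_num), H3]; ring
  -- degrees and leading coefficients
  have d11 : P11.natDegree = 2 := by simpa [Fin.sum_univ_two] using h11.2.1
  have d21 : P21.natDegree = 3 := by simpa [Fin.sum_univ_two] using h21.2.1
  have d31 : P31.natDegree = 4 := by simpa [Fin.sum_univ_two] using h31.2.1
  have lc11 : P11.coeff 2 = 1 := by
    have := h11.1; rwa [Polynomial.Monic, Polynomial.leadingCoeff, d11] at this
  have lc21 : P21.coeff 3 = 1 := by
    have := h21.1; rwa [Polynomial.Monic, Polynomial.leadingCoeff, d21] at this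
  have lc31 : P31.coeff 4 = 1 := by
    have := h31.1; rwa [Polynomial.Monic, Polynomial.leadingCoeff, d31] at this
  -- equations for P11
  have a1 := h11.2.2 0 0 (by norm_num)
  have a2 := h11.2.2 1 0 (by norm_num)
  simp only [Matrix.cons_val_zero, Matrix.cons_val_one, Matrix.head_cons] at a1 a2
  rw [moment_eq P11 (1/2) (by norm_num) 0, d11] at a1
  rw [moment_eq P11 (1/3) (by norm_num) 0, d11] at a2
  simp only [Finset.sum_range_succ, Finset.sum_range_zero] at a1 a2
  norm_num at a1 a2
  rw [G1, G2, lc11] at a1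
  rw [H1, H2, lc11] at a2
  have a1' : P11.coeff 0 + 3/2 * P11.coeff 1 + 15/4 = 0 := by
    have : (P11.coeff 0 + 3/2 * P11.coeff 1 + 15/4) * Real.Gamma (3/2) = 0 := by
      linear_combination a1
    exact (mul_eq_zero.mp this).resolve_right hg.ne'
  have a2' : P11.coeff 0 + 4/3 * P11.coeff 1 + 28/9 = 0 := by
    have : (P11.coeff 0 + 4/3 * P11.coeff 1 + 28/9) * Real.Gamma (4/3) = 0 := by
      linear_combination a2
    exact (mul_eq_zero.mp this).resolve_right hh.ne'
  have c11_1 : P11.coeff 1 = -23/6 := by linarith only [a1', a2']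
  have c11_0 : P11.coeff 0 = 2 := by linarith only [a1', a2']
  -- equations for P21
  have b1 := h21.2.2 0 0 (by norm_num)
  have b2 := h21.2.2 0 1 (by norm_num)
  have b3 := h21.2.2 1 0 (by norm_num)
  simp only [Matrix.cons_val_zero, Matrix.cons_val_one, Matrix.head_cons] at b1 b2 b3
  rw [moment_eq P21 (1/2) (by norm_num) 0, d21] at b1
  rw [moment_eq P21 (1/2) (by norm_num) 1, d21] at b2
  rw [moment_eq P21 (1/3) (by norm_num) 0, d21] at b3
  simp only [Finset.sum_range_succ, Finset.sum_range_zero] at b1 b2 b3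
  norm_num at b1 b2 b3
  rw [G1, G2, G3, lc21] at b1
  rw [G1, G2, G3, G4, lc21] at b2
  rw [H1, H2, H3, lc21] at b3
  have b1' : P21.coeff 0 + 3/2 * P21.coeff 1 + 15/4 * P21.coeff 2 + 105/8 = 0 := by
    have : (P21.coeff 0 + 3/2 * P21.coeff 1 + 15/4 * P21.coeff 2 + 105/8) *
        Real.Gamma (3/2) = 0 := by linear_combination b1
    exact (mul_eq_zero.mp this).resolve_right hg.ne'
  have b2' : 3/2 * P21.coeff 0 + 15/4 * P21.coeff 1 + 105/8 * P21.coeff 2 + 945/16 = 0 := by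
    have : (3/2 * P21.coeff 0 + 15/4 * P21.coeff 1 + 105/8 * P21.coeff 2 + 945/16) *
        Real.Gamma (3/2) = 0 := by linear_combination b2
    exact (mul_eq_zero.mp this).resolve_right hg.ne'
  have b3' : P21.coeff 0 + 4/3 * P21.coeff 1 + 28/9 * P21.coeff 2 + 280/27 = 0 := by
    have : (P21.coeff 0 + 4/3 * P21.coeff 1 + 28/9 * P21.coeff 2 + 280/27) *
        Real.Gamma (4/3) = 0 := by linear_combination b3
    exact (mul_eq_zero.mp this).resolve_right hh.ne'
  have c21_2 : P21.coeff 2 = -25/3 := by linarith only [b1', b2', b3']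
  have c21_1 : P21.coeff 1 = 185/12 := by linarith only [b1', b2', b3']
  have c21_0 : P21.coeff 0 = -5 := by linarith only [b1', b2', b3']
  -- equations for P31
  have e1 := h31.2.2 0 0 (by norm_num)
  have e2 := h31.2.2 0 1 (by norm_num)
  have e3 := h31.2.2 0 2 (by norm_num)
  have e4 := h31.2.2 1 0 (by norm_num)
  simp only [Matrix.cons_val_zero, Matrix.cons_val_one, Matrix.head_cons] at e1 e2 e3 e4
  rw [moment_eq P31 (1/2) (by norm_num) 0, d31] at e1
  rw [moment_eq P31 (1/2) (by norm_num) 1, d31] at e2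
  rw [moment_eq P31 (1/2) (by norm_num) 2, d31] at e3
  rw [moment_eq P31 (1/3) (by norm_num) 0, d31] at e4
  simp only [Finset.sum_range_succ, Finset.sum_range_zero] at e1 e2 e3 e4
  norm_num at e1 e2 e3 e4
  rw [G1, G2, G3, G4, lc31] at e1
  rw [G1, G2, G3, G4, G5, lc31] at e2
  rw [G2, G3, G4, G5, G6, lc31] at e3
  rw [H1, H2, H3, H4, lc31] at e4
  have e1' : P31.coeff 0 + 3/2 * P31.coeff 1 + 15/4 * P31.coeff 2 + 105/8 * P31.coeff 3
      + 945/16 = 0 := by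
    have : (P31.coeff 0 + 3/2 * P31.coeff 1 + 15/4 * P31.coeff 2 + 105/8 * P31.coeff 3
        + 945/16) * Real.Gamma (3/2) = 0 := by linear_combination e1
    exact (mul_eq_zero.mp this).resolve_right hg.ne'
  have e2' : 3/2 * P31.coeff 0 + 15/4 * P31.coeff 1 + 105/8 * P31.coeff 2
      + 945/16 * P31.coeff 3 + 10395/32 = 0 := by
    have : (3/2 * P31.coeff 0 + 15/4 * P31.coeff 1 + 105/8 * P31.coeff 2
        + 945/16 * P31.coeff 3 + 10395/32) * Real.Gamma (3/2) = 0 := by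
      linear_combination e2
    exact (mul_eq_zero.mp this).resolve_right hg.ne'
  have e3' : 15/4 * P31.coeff 0 + 105/8 * P31.coeff 1 + 945/16 * P31.coeff 2
      + 10395/32 * P31.coeff 3 + 135135/64 = 0 := by
    have : (15/4 * P31.coeff 0 + 105/8 * P31.coeff 1 + 945/16 * P31.coeff 2
        + 10395/32 * P31.coeff 3 + 135135/64) * Real.Gamma (3/2) = 0 := by
      linear_combination e3
    exact (mul_eq_zero.mp this).resolve_right hg.ne'
  have e4' : P31.coeff 0 + 4/3 * P31.coeff 1 + 28/9 * P31.coeff 2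
      + 280/27 * P31.coeff 3 + 3640/81 = 0 := by
    have : (P31.coeff 0 + 4/3 * P31.coeff 1 + 28/9 * P31.coeff 2
        + 280/27 * P31.coeff 3 + 3640/81) * Real.Gamma (4/3) = 0 := by
      linear_combination e4
    exact (mul_eq_zero.mp this).resolve_right hh.ne'
  have c31_3 : P31.coeff 3 = -89/6 := by linarith only [e1', e2', e3', e4']
  have c31_2 : P31.coeff 2 = 245/4 := by linarith only [e1', e2', e3', e4']
  have c31_1 : P31.coeff 1 = -595/8 := by linarith only [e1', e2', e3', e4']
  have c31_0 : P31.coeff 0 = 35/2 := by linarith only [e1', e2', e3', e4']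
  -- explicit evaluations
  have hE11 : ∀ x : ℝ, P11.eval x = x^2 - 23/6*x + 2 := by
    intro x
    rw [Polynomial.eval_eq_sum_range, d11]
    simp [Finset.sum_range_succ, c11_0, c11_1, lc11]; ring
  have hE21 : ∀ x : ℝ, P21.eval x = x^3 - 25/3*x^2 + 185/12*x - 5 := by
    intro x
    rw [Polynomial.eval_eq_sum_range, d21]
    simp [Finset.sum_range_succ, c21_0, c21_1, c21_2, lc21]; ring
  have hE31 : ∀ x : ℝ, P31.eval x = x^4 - 89/6*x^3 + 245/4*x^2 - 595/8*x + 35/2 := by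
    intro x
    rw [Polynomial.eval_eq_sum_range, d31]
    simp [Finset.sum_range_succ, c31_0, c31_1, c31_2, c31_3, lc31]; ring
  have hId : ∀ x : ℝ, P21.eval x ^ 2 - P11.eval x * P31.eval x =
      2 * x ^ 5 - 119 / 6 * x ^ 4 + 647 / 9 * x ^ 3 - 7495 / 72 * x ^ 2 +
        185 / 3 * x - 10 := by
    intro x; rw [hE11, hE21, hE31]; ring
  refine ⟨hId, ⟨1, one_pos, by rw [hId]; norm_num⟩,
    ⟨1/10, by norm_num, by rw [hId]; norm_num⟩, fun hall => ?_⟩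
  have h1 := hall (1/10) (by norm_num)
  rw [hId] at h1
  norm_num at h1
end
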